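/- Let F_j be the proximal map of a convex differentiable function f_j with parameter σ² for j = 0,...,J-1, and suppose each v_j* satisfies F_j(v_j*) = P_j x* where x* = x̄(v*) = Λ^{-1} Σ_j P_j^T W v_j*. Then Σ_j P_j^T W ∇f_j(P_j x*) = 0. -/

import Mathlib

open ContinuousLinearMap

set_option maxHeartbeats 1000000

theorem pmace_solution_gives_zero_vector_field
    (J N n : ℕ)
    (P : Fin J → (EuclideanSpace ℝ (Fin N) →L[ℝ] EuclideanSpace ℝ (Fin n)))
    (hP : ∀ j, (P j).comp (ContinuousLinearMap.adjoint (P j)) = ContinuousLinearMap.id ℝ _)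
    (W : EuclideanSpace ℝ (Fin n) →L[ℝ] EuclideanSpace ℝ (Fin n))
    (hWsa : IsSelfAdjoint W)
    (hWpos : ∀ x : EuclideanSpace ℝ (Fin n), x ≠ 0 → (0 : ℝ) < inner ℝ (W x) x)
    (Λ : EuclideanSpace ℝ (Fin N) →L[ℝ] EuclideanSpace ℝ (Fin N))
    (hΛ : ∀ x, Λ x = ∑ j, (ContinuousLinearMap.adjoint (P j)) (W (P j x)))
    (hΛbij : Function.Bijective Λ)
    (f : Fin J → EuclideanSpace ℝ (Fin n) → ℝ)
    (hconv : ∀ j, ConvexOn ℝ Set.univ (f j))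
    (g : Fin J → EuclideanSpace ℝ (Fin n) → EuclideanSpace ℝ (Fin n))
    (hg : ∀ j x, HasGradientAt (f j) (g j x) x)
    (σ : ℝ) (hσ : 0 < σ)
    (F : Fin J → EuclideanSpace ℝ (Fin n) → EuclideanSpace ℝ (Fin n))
    (hF : ∀ j v u, f j (F j v) + ‖F j v - v‖ ^ 2 / (2 * σ ^ 2)
            ≤ f j u + ‖u - v‖ ^ 2 / (2 * σ ^ 2))
    (v : Fin J → EuclideanSpace ℝ (Fin n))
    (xs : EuclideanSpace ℝ (Fin N))
    (hxs : Λ xs = ∑ j, (ContinuousLinearMap.adjoint (P j)) (W (v j)))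
    (hFv : ∀ j, F j (v j) = P j xs) :
    ∑ j, (ContinuousLinearMap.adjoint (P j)) (W (g j (P j xs))) = 0 := by
  have hσ2 : (2 * σ ^ 2) ≠ 0 := by positivity
  have key : ∀ j, g j (P j xs) = (σ ^ 2)⁻¹ • (v j - P j xs) := by
    intro j
    set u0 := P j xs with hu0
    have hmin : IsLocalMin (fun u => f j u + ‖u - v j‖ ^ 2 / (2 * σ ^ 2)) u0 := by
      apply Filter.Eventually.of_forall
      intro u
      have := hF j (v j) u
      rwa [hFv j] at this
    have h2 : HasFDerivAt (fun u : EuclideanSpace ℝ (Fin n) => ‖u - v j‖ ^ 2)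
        (2 • innerSL ℝ (u0 - v j)) u0 := by
      simpa using ((hasFDerivAt_id u0).sub_const (v j)).norm_sq
    have hd : HasFDerivAt (fun u => f j u + ‖u - v j‖ ^ 2 / (2 * σ ^ 2))
        ((InnerProductSpace.toDual ℝ _ (g j u0) : _ →L[ℝ] ℝ)
          + (2 * σ ^ 2)⁻¹ • (2 • innerSL ℝ (u0 - v j))) u0 := by
      have h1 : HasFDerivAt (f j) (InnerProductSpace.toDual ℝ _ (g j u0) : _ →L[ℝ] ℝ) u0 :=
        (hg j u0).hasFDerivAt
      have h2' : HasFDerivAt (fun u : EuclideanSpace ℝ (Fin n) => ‖u - v j‖ ^ 2 / (2 * σ ^ 2))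
          ((2 * σ ^ 2)⁻¹ • (2 • innerSL ℝ (u0 - v j))) u0 := by
        have feq : (fun u : EuclideanSpace ℝ (Fin n) => ‖u - v j‖ ^ 2 / (2 * σ ^ 2))
            = fun u : EuclideanSpace ℝ (Fin n) => (2 * σ ^ 2)⁻¹ • ‖u - v j‖ ^ 2 := by
          funext u; simp [div_eq_inv_mul]
        rw [feq]
        exact h2.const_smul (2 * σ ^ 2)⁻¹
      exact h1.add h2'
    have hzero := hmin.hasFDerivAt_eq_zero hd
    apply ext_inner_left ℝ
    intro w
    have hw := congrArg (fun T : EuclideanSpace ℝ (Fin n) →L[ℝ] ℝ => T w) hzero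
    simp only [ContinuousLinearMap.add_apply, ContinuousLinearMap.smul_apply,
      ContinuousLinearMap.zero_apply, InnerProductSpace.toDual_apply_apply,
      innerSL_apply_apply, smul_eq_mul, two_smul, ContinuousLinearMap.add_apply] at hw
    have : (inner ℝ (g j u0) w : ℝ) = (σ ^ 2)⁻¹ * inner ℝ (v j - u0) w := by
      have h3 : (inner ℝ (u0 - v j) w : ℝ) = - inner ℝ (v j - u0) w := by
        rw [← inner_neg_left]; congr 1; abel
      rw [h3] at hw
      field_simp at hw ⊢
      nlinarith [hw]
    rw [real_inner_smul_right, ← real_inner_comm w (g j u0), this, real_inner_comm w (v j - u0)]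
  have hsum : ∑ j, (ContinuousLinearMap.adjoint (P j)) (W (g j (P j xs)))
      = (σ ^ 2)⁻¹ • (∑ j, (ContinuousLinearMap.adjoint (P j)) (W (v j))
          - ∑ j, (ContinuousLinearMap.adjoint (P j)) (W (P j xs))) := by
    calc ∑ j, (ContinuousLinearMap.adjoint (P j)) (W (g j (P j xs)))
        = ∑ j, (σ ^ 2)⁻¹ • ((ContinuousLinearMap.adjoint (P j)) (W (v j))
            - (ContinuousLinearMap.adjoint (P j)) (W (P j xs))) := by
          apply Finset.sum_congr rfl
          intro j _
          rw [key j]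
          simp [smul_sub]
      _ = (σ ^ 2)⁻¹ • ∑ j, ((ContinuousLinearMap.adjoint (P j)) (W (v j))
            - (ContinuousLinearMap.adjoint (P j)) (W (P j xs))) := (Finset.smul_sum).symm
      _ = _ := by rw [Finset.sum_sub_distrib]
  rw [hsum, ← hΛ, ← hxs, sub_self, smul_zero]
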